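/- Define parallelism on lines of a projective space P with horizon W by: k₁ ∥ k₂ iff k₁ ∩ k₂ is nonempty and contained in W. Then for distinct proper lines k₁, k₂: k₁ ∥ k₂ if and only if (there exist a proper line k₃ forming a triangle with k₁, k₂, and a proper line l meeting k₁, k₂, k₃ in proper points c₁, c₂, c₃) and no proper point lies on both k₁ and k₂. -/

import Mathlib

/-- A projective space of dimension at least 3, given by its point set `S` and its
set of lines: any two points lie on a unique line, the Veblen (Pasch) axiom holds,
and there exist two disjoint lines (dimension ≥ 3). -/
structure ProjSpace (S : Type*) where
  L : Set (Set S)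
  two_points : ∀ k ∈ L, ∃ a ∈ k, ∃ b ∈ k, a ≠ b
  unique_meet : ∀ k ∈ L, ∀ l ∈ L, k ≠ l → (k ∩ l).Subsingleton
  join : ∀ a b : S, a ≠ b → ∃ k ∈ L, a ∈ k ∧ b ∈ k
  veblen : ∀ l₁ ∈ L, ∀ l₂ ∈ L, ∀ l₃ ∈ L, ∀ l₄ ∈ L, ∀ p a b c d : S,
    l₁ ≠ l₂ → p ≠ a → p ≠ b → p ≠ c → p ≠ d →
    p ∈ l₁ → a ∈ l₁ → c ∈ l₁ → p ∈ l₂ → b ∈ l₂ → d ∈ l₂ →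
    a ∈ l₃ → b ∈ l₃ → c ∈ l₄ → d ∈ l₄ → (l₃ ∩ l₄).Nonempty
  dim3 : ∃ k ∈ L, ∃ l ∈ L, k ∩ l = ∅

namespace ProjSpace

variable {S : Type*}

/-- A subspace: any line through two of its points is contained in it. -/
def IsSubspace (P : ProjSpace S) (X : Set S) : Prop :=
  ∀ k ∈ P.L, ∀ a ∈ k, ∀ b ∈ k, a ≠ b → a ∈ X → b ∈ X → k ⊆ X

/-- The subspace spanned by a point set. -/
def span (P : ProjSpace S) (X : Set S) : Set S :=
  ⋂₀ {Y | P.IsSubspace Y ∧ X ⊆ Y}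

/-- A plane: the span of a line together with a point outside it. -/
def IsPlane (P : ProjSpace S) (Pl : Set S) : Prop :=
  ∃ k ∈ P.L, ∃ a, a ∉ k ∧ Pl = P.span (insert a k)

/-- `HasIndex P W lam`: some line has exactly `lam` points in `W` and every line not
contained in `W` has at most `lam` points in `W`. -/
def HasIndex (P : ProjSpace S) (W : Set S) (lam : ℕ) : Prop :=
  (∃ k ∈ P.L, (k ∩ W).encard = (lam : ℕ∞)) ∧
    ∀ k ∈ P.L, ¬ k ⊆ W → (k ∩ W).encard ≤ (lam : ℕ∞)

/-- Three lines form a triangle: pairwise distinct, pairwise intersecting,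
not concurrent. -/
def LineTriangle (P : ProjSpace S) (k₁ k₂ k₃ : Set S) : Prop :=
  k₁ ∈ P.L ∧ k₂ ∈ P.L ∧ k₃ ∈ P.L ∧ k₁ ≠ k₂ ∧ k₁ ≠ k₃ ∧ k₂ ≠ k₃ ∧
    (k₁ ∩ k₂).Nonempty ∧ (k₁ ∩ k₃).Nonempty ∧ (k₂ ∩ k₃).Nonempty ∧
    ¬ (k₁ ∩ k₂ ∩ k₃).Nonempty

/-- Parallelism w.r.t. the horizon `W`: the lines meet, and only inside `W`. -/
def Par (W : Set S) (k₁ k₂ : Set S) : Prop :=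
  (k₁ ∩ k₂).Nonempty ∧ k₁ ∩ k₂ ⊆ W

end ProjSpace

open ProjSpace in
private lemma proper_points_encard {S : Type*} (P : ProjSpace S) (W : Set S)
    (lam : ℕ) (hind : P.HasIndex W lam)
    (hsize : ∀ k ∈ P.L, 2 * (lam : ℕ∞) + 2 ≤ k.encard)
    (k : Set S) (hk : k ∈ P.L) (hp : ¬ k ⊆ W) :
    (lam : ℕ∞) + 2 ≤ (k \ W).encard := by
  have h1 : (k \ W).encard + (k ∩ W).encard = k.encard :=
    Set.encard_diff_add_encard_inter k W
  have h2 : (k ∩ W).encard ≤ (lam : ℕ∞) := hind.2 k hk hp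
  have h3 : 2 * (lam : ℕ∞) + 2 ≤ k.encard := hsize k hk
  have h4 : ((lam : ℕ∞) + 2) + (lam : ℕ∞) ≤ (k \ W).encard + (lam : ℕ∞) := by
    calc ((lam : ℕ∞) + 2) + (lam : ℕ∞) = 2 * (lam : ℕ∞) + 2 := by ring
    _ ≤ k.encard := h3
    _ = (k \ W).encard + (k ∩ W).encard := h1.symm
    _ ≤ (k \ W).encard + (lam : ℕ∞) := add_le_add_right h2 _
  exact (WithTop.add_le_add_iff_right (ENat.coe_ne_top lam)).mp h4
open ProjSpace in
theorem parallel_internal_characterization {S : Type*} (P : ProjSpace S) (W : Set S)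
    (lam : ℕ) (hlam : 0 < lam) (hind : P.HasIndex W lam)
    (hsize : ∀ k ∈ P.L, 2 * (lam : ℕ∞) + 2 ≤ k.encard)
    (k₁ k₂ : Set S) (hk₁ : k₁ ∈ P.L) (hk₂ : k₂ ∈ P.L)
    (hp₁ : ¬ k₁ ⊆ W) (hp₂ : ¬ k₂ ⊆ W) (hne : k₁ ≠ k₂) :
    Par W k₁ k₂ ↔
      ((∃ k₃ ∈ P.L, ∃ l ∈ P.L, ¬ k₃ ⊆ W ∧ ¬ l ⊆ W ∧
          LineTriangle P k₁ k₂ k₃ ∧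
          ∃ c₁ c₂ c₃ : S, c₁ ∉ W ∧ c₂ ∉ W ∧ c₃ ∉ W ∧
            c₁ ∈ l ∩ k₁ ∧ c₂ ∈ l ∩ k₂ ∧ c₃ ∈ l ∩ k₃) ∧
        ¬ ∃ x : S, x ∉ W ∧ x ∈ k₁ ∩ k₂) := by
  constructor
  · rintro ⟨hmeet, hsub⟩
    refine ⟨?_, fun ⟨x, hxW, hx⟩ => hxW (hsub hx)⟩
    obtain ⟨p, hp⟩ := hmeet
    have hpW : p ∈ W := hsub hp
    have hc1 : (lam : ℕ∞) + 2 ≤ (k₁ \ W).encard :=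
      proper_points_encard P W lam hind hsize k₁ hk₁ hp₁
    have hc2 : (lam : ℕ∞) + 2 ≤ (k₂ \ W).encard :=
      proper_points_encard P W lam hind hsize k₂ hk₂ hp₂
    have hone : (1 : ℕ∞) < (lam : ℕ∞) + 2 := by
      exact_mod_cast (show 1 < lam + 2 by omega)
    -- pick proper points a₁ ∈ k₁, a₂ ∈ k₂
    obtain ⟨a₁, ha₁, -⟩ := Set.exists_ne_of_one_lt_encard (lt_of_lt_of_le hone hc1) p
    obtain ⟨a₂, ha₂, -⟩ := Set.exists_ne_of_one_lt_encard (lt_of_lt_of_le hone hc2) p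
    have ha₁₂ : a₁ ≠ a₂ := by
      rintro rfl; exact ha₁.2 (hsub ⟨ha₁.1, ha₂.1⟩)
    obtain ⟨l, hl, ha₁l, ha₂l⟩ := P.join a₁ a₂ ha₁₂
    have hlW : ¬ l ⊆ W := fun h => ha₁.2 (h ha₁l)
    have hlk₁ : l ≠ k₁ := by
      rintro rfl; exact ha₂.2 (hsub ⟨ha₂l, ha₂.1⟩)
    have hlk₂ : l ≠ k₂ := by
      rintro rfl; exact ha₁.2 (hsub ⟨ha₁.1, ha₁l⟩)
    -- pick a second proper point b₁ ∈ k₁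
    obtain ⟨b₁, hb₁, hb₁a₁⟩ := Set.exists_ne_of_one_lt_encard (lt_of_lt_of_le hone hc1) a₁
    have hb₁k₂ : b₁ ∉ k₂ := fun h => hb₁.2 (hsub ⟨hb₁.1, h⟩)
    have hb₁l : b₁ ∉ l := by
      intro h
      exact hb₁a₁ (P.unique_meet l hl k₁ hk₁ hlk₁ ⟨h, hb₁.1⟩ ⟨ha₁l, ha₁.1⟩)
    have hpa₁ : p ≠ a₁ := fun h => ha₁.2 (h ▸ hpW)
    have hpa₂ : p ≠ a₂ := fun h => ha₂.2 (h ▸ hpW)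
    have hpb₁ : p ≠ b₁ := fun h => hb₁.2 (h ▸ hpW)
    -- key claim: some b₂ ∈ k₂ \ W yields a line b₁b₂ meeting l in a proper point
    have hclaim : ∃ b₂ ∈ k₂ \ W, ∃ k₃ ∈ P.L, b₁ ∈ k₃ ∧ b₂ ∈ k₃ ∧
        ∃ c ∈ l ∩ k₃, c ∉ W := by
      by_contra hcon
      push_neg at hcon
      have hfun : ∀ b₂, b₂ ∈ k₂ \ W → ∃ c, c ∈ l ∩ W ∧ ∃ k₃ ∈ P.L,
          b₁ ∈ k₃ ∧ b₂ ∈ k₃ ∧ c ∈ k₃ := by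
        intro b₂ hb₂
        have hb₁₂ : b₁ ≠ b₂ := by rintro rfl; exact hb₁k₂ hb₂.1
        obtain ⟨k₃, hk₃, hb₁k₃, hb₂k₃⟩ := P.join b₁ b₂ hb₁₂
        have hpb₂ : p ≠ b₂ := fun h => hb₂.2 (h ▸ hpW)
        obtain ⟨c, hcl, hck₃⟩ := P.veblen k₁ hk₁ k₂ hk₂ l hl k₃ hk₃ p a₁ a₂ b₁ b₂
          hne hpa₁ hpa₂ hpb₁ hpb₂ hp.1 ha₁.1 hb₁.1 hp.2 ha₂.1 hb₂.1
          ha₁l ha₂l hb₁k₃ hb₂k₃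
        have hcW : c ∈ W := hcon b₂ hb₂ k₃ hk₃ hb₁k₃ hb₂k₃ c ⟨hcl, hck₃⟩
        exact ⟨c, ⟨hcl, hcW⟩, k₃, hk₃, hb₁k₃, hb₂k₃, hck₃⟩
      classical
      set f : S → S := fun b₂ => if h : b₂ ∈ k₂ \ W then (hfun b₂ h).choose else b₂
        with hf
      have hfspec : ∀ b₂ (h : b₂ ∈ k₂ \ W), f b₂ ∈ l ∩ W ∧ ∃ k₃ ∈ P.L,
          b₁ ∈ k₃ ∧ b₂ ∈ k₃ ∧ f b₂ ∈ k₃ := by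
        intro b₂ h
        simp only [hf]
        rw [dif_pos h]
        exact (hfun b₂ h).choose_spec
      have hinj : Set.InjOn f (k₂ \ W) := by
        intro x hx y hy hxy
        by_contra hxyne
        obtain ⟨hfx, kx, hkx, hb₁x, hxkx, hfxkx⟩ := hfspec x hx
        obtain ⟨hfy, ky, hky, hb₁y, hyky, hfyky⟩ := hfspec y hy
        have hkxk₂ : kx ≠ k₂ := by rintro rfl; exact hb₁k₂ hb₁x
        have hkyk₂ : ky ≠ k₂ := by rintro rfl; exact hb₁k₂ hb₁y
        have hkxy : kx ≠ ky := by
          rintro rfl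
          exact hxyne (P.unique_meet kx hkx k₂ hk₂ hkxk₂ ⟨hxkx, hx.1⟩ ⟨hyky, hy.1⟩)
        have : f x = b₁ := by
          have := P.unique_meet kx hkx ky hky hkxy ⟨hfxkx, hxy ▸ hfyky⟩ ⟨hb₁x, hb₁y⟩
          exact this
        exact hb₁l (this ▸ hfx.1)
      have h1 : ((k₂ \ W)).encard ≤ (l ∩ W).encard := by
        rw [← hinj.encard_image]
        exact Set.encard_le_encard (fun c ⟨b₂, hb₂, hc⟩ => hc ▸ (hfspec b₂ hb₂).1)
      have h2 : (l ∩ W).encard ≤ (lam : ℕ∞) := hind.2 l hl hlW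
      have : (lam : ℕ∞) + 2 ≤ (lam : ℕ∞) := le_trans hc2 (le_trans h1 h2)
      have : lam + 2 ≤ lam := by exact_mod_cast this
      omega
    obtain ⟨b₂, hb₂, k₃, hk₃, hb₁k₃, hb₂k₃, c₃, hc₃, hc₃W⟩ := hclaim
    have hk₁k₃ : k₁ ≠ k₃ := by
      rintro rfl; exact hb₂.2 (hsub ⟨hb₂k₃, hb₂.1⟩)
    have hk₂k₃ : k₂ ≠ k₃ := by
      rintro rfl; exact hb₁k₂ hb₁k₃
    refine ⟨k₃, hk₃, l, hl, fun h => hb₁.2 (h hb₁k₃), hlW,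
      ⟨hk₁, hk₂, hk₃, hne, hk₁k₃, hk₂k₃, ⟨p, hp⟩, ⟨b₁, hb₁.1, hb₁k₃⟩,
        ⟨b₂, hb₂.1, hb₂k₃⟩, ?_⟩,
      a₁, a₂, c₃, ha₁.2, ha₂.2, hc₃W,
      ⟨ha₁l, ha₁.1⟩, ⟨ha₂l, ha₂.1⟩, hc₃⟩
    rintro ⟨x, ⟨hx₁₂, hxk₃⟩⟩
    have hxp : x = p := P.unique_meet k₁ hk₁ k₂ hk₂ hne hx₁₂ hp
    subst hxp
    exact hpb₁ (P.unique_meet k₁ hk₁ k₃ hk₃ hk₁k₃ ⟨hx₁₂.1, hxk₃⟩ ⟨hb₁.1, hb₁k₃⟩)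
  · rintro ⟨⟨k₃, _, l, _, _, _, htri, _⟩, hno⟩
    exact ⟨htri.2.2.2.2.2.2.1, fun x hx => by
      by_contra hxW; exact hno ⟨x, hxW, hx⟩⟩
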